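/- Let G be a finite connected simple graph and T a spanning tree of G. An edge e of G lies on some simple cycle of G if and only if either e is a cross edge (an edge of G not in T), or e is an edge of T lying on the unique path in T between the two endpoints of some cross edge. (Equivalently, the union C of all simple cycles of G equals the union, over all cross edges {u, v}, of {u, v} together with the edges of the T-path from u to v.) -/

import Mathlib

private lemma exists_adj_boundary {V : Type*} {H : SimpleGraph V} (P : V → Prop) :
    ∀ {a b : V}, H.Walk a b → P a → ¬ P b →
      ∃ x y : V, H.Adj x y ∧ P x ∧ ¬ P y := by
  intro a b w
  induction w with
  | nil => intro ha hb; exact absurd ha hb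
  | @cons c d f h q ih =>
    intro ha hb
    by_cases hm : P d
    · exact ih hm hb
    · exact ⟨_, _, h, ha, hm⟩

/-- Let `T` be a spanning tree of a finite connected simple
graph `G`.  An edge `e` of `G` lies on some simple cycle of `G` iff either `e`
is a cross edge (an edge of `G` not in `T`), or `e` is an edge of `T` lying on
the unique `T`-path between the endpoints of some cross edge. -/
theorem cycle_edge_iff_cross_or_on_cross_path {V : Type*} [Fintype V]
    (G T : SimpleGraph V) (hG : G.Connected) (hTG : T ≤ G) (hT : T.IsTree)
    (e : Sym2 V) (he : e ∈ G.edgeSet) :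
    (∃ (x : V) (c : G.Walk x x), c.IsCycle ∧ e ∈ c.edges) ↔
    (e ∉ T.edgeSet ∨
      (e ∈ T.edgeSet ∧ ∃ u v : V, G.Adj u v ∧ ¬ T.Adj u v ∧
        ∀ p : T.Walk u v, p.IsPath → e ∈ p.edges)) := by
  classical
  induction e using Sym2.ind with
  | _ a b =>
  rw [SimpleGraph.mem_edgeSet] at he
  constructor
  · -- forward direction
    intro hcyc
    by_cases hTe : s(a, b) ∈ T.edgeSet
    · right
      refine ⟨hTe, ?_⟩
      -- `s(a,b)` is a bridge of `T`
      have hbr : T.IsBridge s(a, b) :=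
        (SimpleGraph.isAcyclic_iff_forall_edge_isBridge.mp hT.IsAcyclic) hTe
      have hnr : ¬ (T \ SimpleGraph.fromEdgeSet {s(a, b)}).Reachable a b :=
        SimpleGraph.isBridge_iff.mp hbr
      -- get reachability in `G` minus the edge
      have hre : (G \ SimpleGraph.fromEdgeSet {s(a, b)}).Reachable a b :=
        (SimpleGraph.adj_and_reachable_delete_edges_iff_exists_cycle.mpr hcyc).2
      obtain ⟨w⟩ := hre
      set P : V → Prop := fun z => (T \ SimpleGraph.fromEdgeSet {s(a, b)}).Reachable a z with hP
      have hPa : P a := SimpleGraph.Reachable.refl a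
      have hPb : ¬ P b := hnr
      obtain ⟨x, y, hxy, hPx, hPy⟩ := exists_adj_boundary P w hPa hPb
      rw [SimpleGraph.sdiff_adj] at hxy
      have hne : s(x, y) ≠ s(a, b) := by
        intro hh
        exact hxy.2 (by rw [SimpleGraph.fromEdgeSet_adj]; exact ⟨hh, hxy.1.ne⟩)
      have hTxy : ¬ T.Adj x y := by
        intro hTxy
        apply hPy
        refine hPx.trans (SimpleGraph.Adj.reachable ?_)
        rw [SimpleGraph.sdiff_adj]
        exact ⟨hTxy, fun hc => hne ((SimpleGraph.fromEdgeSet_adj _).mp hc).1⟩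
      refine ⟨x, y, hxy.1, hTxy, ?_⟩
      intro p hp
      by_contra hep
      apply hPy
      refine hPx.trans ⟨p.transfer (T \ SimpleGraph.fromEdgeSet {s(a, b)}) ?_⟩
      intro f hf
      rw [SimpleGraph.edgeSet_sdiff, SimpleGraph.edgeSet_fromEdgeSet,
        SimpleGraph.edgeSet_sdiff_sdiff_isDiag, Set.mem_diff, Set.mem_singleton_iff]
      exact ⟨p.edges_subset_edgeSet hf, fun h' => hep (h' ▸ hf)⟩
    · exact Or.inl hTe
  · -- backward direction: construct explicit cycles
    rintro (hTe | ⟨hTe, u, v, hGuv, hTuv, hall⟩)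
    · -- cross edge: the `T`-path from `b` to `a` plus the edge gives a cycle
      obtain ⟨p₀⟩ := hT.isConnected.1 b a
      let p : T.Path b a := p₀.toPath
      have hsub : T.edgeSet ⊆ G.edgeSet := SimpleGraph.edgeSet_mono hTG
      let q : G.Walk b a := (p : T.Walk b a).transfer G
        (fun f hf => hsub ((p : T.Walk b a).edges_subset_edgeSet hf))
      have hq : q.IsPath := p.2.transfer _
      have hqe : q.edges = (p : T.Walk b a).edges :=
        SimpleGraph.Walk.edges_transfer _ _
      have hnot : s(a, b) ∉ q.edges := by
        rw [hqe]
        intro hc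
        exact hTe ((p : T.Walk b a).edges_subset_edgeSet hc)
      refine ⟨a, SimpleGraph.Walk.cons he q, ?_, ?_⟩
      · rw [SimpleGraph.Walk.cons_isCycle_iff]
        exact ⟨hq, hnot⟩
      · simp
    · -- tree edge on the `T`-path of a cross edge
      obtain ⟨p₀⟩ := hT.isConnected.1 u v
      let p : T.Path u v := p₀.toPath
      have hep : s(a, b) ∈ (p : T.Walk u v).edges := hall _ p.2
      have hsub : T.edgeSet ⊆ G.edgeSet := SimpleGraph.edgeSet_mono hTG
      let r : T.Walk v u := (p : T.Walk u v).reverse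
      let q : G.Walk v u := r.transfer G
        (fun f hf => hsub (r.edges_subset_edgeSet hf))
      have hq : q.IsPath := (p.2.reverse).transfer _
      have hqe : q.edges = r.edges := SimpleGraph.Walk.edges_transfer _ _
      have hmem : s(a, b) ∈ q.edges := by
        rw [hqe]
        simpa [r, SimpleGraph.Walk.edges_reverse] using hep
      have hnot : s(u, v) ∉ q.edges := by
        rw [hqe]
        intro hc
        exact hTuv (r.edges_subset_edgeSet hc)
      refine ⟨u, SimpleGraph.Walk.cons hGuv q, ?_, ?_⟩
      · rw [SimpleGraph.Walk.cons_isCycle_iff]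
        exact ⟨hq, hnot⟩
      · simp [hmem]
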